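/- Let I ⊂ (0, π) be an interval and u : I → ℝ a differentiable function with 0 < u(θ) < u_max for all θ ∈ I, satisfying (c(u(θ))² − u(θ)²)·u′(θ) + cot θ·c(u(θ))²·u(θ) = 0 for all θ ∈ I. Then the mass flux θ ↦ ρ(u(θ))·u(θ)·sin θ is constant on I (conservation of mass for the symmetric flow on the sphere). -/

import Mathlib

open Real Set Filter Topology

/-- Maximal speed `u_max = √(2c₀²/(γ−1))`. -/
noncomputable def uMax (γ c₀ : ℝ) : ℝ := Real.sqrt (2 * c₀ ^ 2 / (γ - 1))

/-- Critical (sonic) speed `c_* = √(2c₀²/(γ+1))`. -/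
noncomputable def cStar (γ c₀ : ℝ) : ℝ := Real.sqrt (2 * c₀ ^ 2 / (γ + 1))

/-- Local sonic speed `c(u) = √(c₀² − ((γ−1)/2)u²)`. -/
noncomputable def sonic (γ c₀ u : ℝ) : ℝ := Real.sqrt (c₀ ^ 2 - (γ - 1) / 2 * u ^ 2)

/-- Density `ρ(u) = ((c₀² − ((γ−1)/2)u²)/γ)^{1/(γ−1)}`. -/
noncomputable def dens (γ c₀ u : ℝ) : ℝ :=
  ((c₀ ^ 2 - (γ - 1) / 2 * u ^ 2) / γ) ^ ((1 : ℝ) / (γ - 1))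

/-- Mass flux `F(u) = ρ(u)·u`. -/
noncomputable def flux (γ c₀ u : ℝ) : ℝ := dens γ c₀ u * u

/-- Pressure `p(u) = ρ(u)^γ`. -/
noncomputable def pres (γ c₀ u : ℝ) : ℝ := dens γ c₀ u ^ γ

/-- the mass flux `ρ(u(θ))·u(θ)·sin θ` is constant along solutions of the
symmetric potential flow ODE on the sphere. -/
theorem mass_flux_constant_on_sphere (γ c₀ : ℝ) (hγ : 1 < γ) (hc₀ : 0 < c₀)
    (I : Set ℝ) (hI : I ⊆ Set.Ioo 0 π) (hIc : I.OrdConnected)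
    (u u' : ℝ → ℝ)
    (hderiv : ∀ θ ∈ I, HasDerivWithinAt u (u' θ) I θ)
    (hrange : ∀ θ ∈ I, u θ ∈ Set.Ioo 0 (uMax γ c₀))
    (hode : ∀ θ ∈ I,
      (sonic γ c₀ (u θ) ^ 2 - u θ ^ 2) * u' θ +
        Real.cot θ * sonic γ c₀ (u θ) ^ 2 * u θ = 0) :
    ∀ θ₁ ∈ I, ∀ θ₂ ∈ I,
      dens γ c₀ (u θ₁) * u θ₁ * Real.sin θ₁ = dens γ c₀ (u θ₂) * u θ₂ * Real.sin θ₂ := by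
  have hγ1 : (0:ℝ) < γ - 1 := by linarith
  have hγ0 : (0:ℝ) < γ := by linarith
  set e : ℝ := (1:ℝ) / (γ - 1) with he
  set g : ℝ → ℝ := fun θ => dens γ c₀ (u θ) * u θ * Real.sin θ with hg
  have key : ∀ θ ∈ I, HasDerivWithinAt g 0 I θ := by
    intro θ hθ
    obtain ⟨hθ0, hθπ⟩ := hI hθ
    have hsin : Real.sin θ > 0 := Real.sin_pos_of_pos_of_lt_pi hθ0 hθπ
    obtain ⟨hu0, huM⟩ := hrange θ hθ
    have husq : u θ ^ 2 < 2 * c₀ ^ 2 / (γ - 1) := by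
      have h2 : (0:ℝ) ≤ 2 * c₀ ^ 2 / (γ - 1) := by positivity
      have h3 := huM
      rw [uMax] at h3
      calc u θ ^ 2 < Real.sqrt (2 * c₀ ^ 2 / (γ - 1)) ^ 2 := by
            exact pow_lt_pow_left₀ h3 hu0.le two_ne_zero
        _ = 2 * c₀ ^ 2 / (γ - 1) := Real.sq_sqrt h2
    have hc2 : 0 < c₀ ^ 2 - (γ - 1) / 2 * u θ ^ 2 := by
      have h4 : (γ - 1) / 2 * u θ ^ 2 < (γ - 1) / 2 * (2 * c₀ ^ 2 / (γ - 1)) :=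
        mul_lt_mul_of_pos_left husq (by positivity)
      have heq : (γ - 1) / 2 * (2 * c₀ ^ 2 / (γ - 1)) = c₀ ^ 2 := by
        field_simp
      linarith
    set x := u θ with hx
    set A : ℝ := (c₀ ^ 2 - (γ - 1) / 2 * x ^ 2) / γ with hA
    have hApos : 0 < A := by positivity
    have hγA : γ * A = c₀ ^ 2 - (γ - 1) / 2 * x ^ 2 := by
      rw [hA]; field_simp
    have hson : sonic γ c₀ x ^ 2 = c₀ ^ 2 - (γ - 1) / 2 * x ^ 2 :=
      Real.sq_sqrt hc2.le
    have hode' : Real.sin θ * ((γ * A - x ^ 2) * u' θ)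
        + Real.cos θ * (γ * A) * x = 0 := by
      have h := hode θ hθ
      rw [hson, Real.cot_eq_cos_div_sin, ← hγA] at h
      have hcs : Real.cos θ = Real.sin θ * (Real.cos θ / Real.sin θ) := by
        field_simp
      rw [hcs]
      linear_combination Real.sin θ * h
    have hq : HasDerivWithinAt (fun t => (c₀ ^ 2 - (γ - 1) / 2 * u t ^ 2) / γ)
        ((-(γ - 1) * x / γ) * u' θ) I θ := by
      have h1 : HasDerivWithinAt (fun t => u t ^ 2) (2 * x * u' θ) I θ := by
        simpa using ((hderiv θ hθ).fun_pow 2)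
      have h2 := ((h1.const_mul ((γ - 1) / 2)).const_sub (c₀ ^ 2)).div_const γ
      refine h2.congr_deriv ?_
      ring
    have hrpow : HasDerivAt (fun y : ℝ => y ^ e) (e * A ^ (e - 1)) A :=
      Real.hasDerivAt_rpow_const (Or.inl hApos.ne')
    have hdens : HasDerivWithinAt (fun t => dens γ c₀ (u t))
        (e * A ^ (e - 1) * ((-(γ - 1) * x / γ) * u' θ)) I θ := by
      have h5 := hrpow.comp_hasDerivWithinAt θ hq
      exact h5
    have hdA : dens γ c₀ x = A ^ e := by rw [dens, hA]
    have hprod : HasDerivWithinAt g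
        ((e * A ^ (e - 1) * ((-(γ - 1) * x / γ) * u' θ) * x + A ^ e * u' θ) * Real.sin θ
          + A ^ e * x * Real.cos θ) I θ := by
      have h1 := (hdens.fun_mul (hderiv θ hθ)).fun_mul (Real.hasDerivAt_sin θ).hasDerivWithinAt
      simpa [hg, hdA, ← hx] using h1
    convert hprod using 1
    have hAe2 : A ^ (e - 1) * A = A ^ e := by
      rw [Real.rpow_sub_one hApos.ne']; field_simp
    have heγ : e * (γ - 1) = 1 := by rw [he]; field_simp
    clear_value A
    rw [Real.rpow_sub_one hApos.ne', he]
    field_simp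
    linear_combination (-A ^ e) * hode'
  intro θ₁ h₁ θ₂ h₂
  have hconv : Convex ℝ I := hIc.convex
  have hle := hconv.norm_image_sub_le_of_norm_hasDerivWithin_le
    (f := g) (f' := fun _ => (0:ℝ)) key (fun x _ => le_of_eq norm_zero) h₁ h₂
  simp only [Real.norm_eq_abs, zero_mul] at hle
  have h0 : g θ₂ = g θ₁ := by
    have := abs_nonneg (g θ₂ - g θ₁)
    have h1 : |g θ₂ - g θ₁| = 0 := le_antisymm hle this
    have := abs_eq_zero.mp h1
    linarith
  simpa [hg] using h0.symm
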